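/- Let Ψ : ℝ → ℝ be the solution of the initial value problem -Ψ'' = γ₊² Ψ⁺ - γ₋² Ψ⁻, Ψ(0) = 0, Ψ'(0) = 1, where γ₊, γ₋ > 0 and Ψ⁺(x) = max{Ψ(x),0}, Ψ⁻(x) = max{-Ψ(x),0}. Then Ψ is periodic with period p = π/γ₊ + π/γ₋. -/

import Mathlib

open Real Set

/-- Global uniqueness for an autonomous Lipschitz ODE on all of ℝ. -/
lemma globalODEUnique {E : Type*} [NormedAddCommGroup E] [NormedSpace ℝ E]
    {v : E → E} {K : NNReal} (hv : LipschitzWith K v) {f g : ℝ → E}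
    (hf : ∀ t, HasDerivAt f (v (f t)) t) (hg : ∀ t, HasDerivAt g (v (g t)) t)
    (heq : f 0 = g 0) : ∀ t, f t = g t := by
  intro t
  have hb : (0:ℝ) < |t| + 1 := by positivity
  have := ODE_solution_unique_of_mem_Icc (v := fun _ : ℝ => v)
    (s := fun _ : ℝ => (univ : Set E)) (K := K)
    (fun _ _ => hv.lipschitzOnWith) (t₀ := 0) (a := -(|t|+1)) (b := |t|+1)
    (f := f) (g := g)
    ⟨by linarith, hb⟩
    (fun s _ => (hf s).continuousAt.continuousWithinAt)
    (fun s _ => hf s) (fun _ _ => trivial)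
    (fun s _ => (hg s).continuousAt.continuousWithinAt)
    (fun s _ => hg s) (fun _ _ => trivial) heq
  exact this (abs_le.mp (le_of_lt (by linarith [le_abs_self t, neg_abs_le t] : |t| < |t|+1))
    |>.imp (fun h => h) (fun h => h))

theorem stmt_1 (γp γm : ℝ) (hγp : 0 < γp) (hγm : 0 < γm)
    (Ψ Ψ' : ℝ → ℝ)
    (hΨ : ∀ x, HasDerivAt Ψ (Ψ' x) x)
    (hΨ' : ∀ x, HasDerivAt Ψ'
      (-(γp ^ 2 * max (Ψ x) 0 - γm ^ 2 * max (-Ψ x) 0)) x)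
    (h0 : Ψ 0 = 0) (h0' : Ψ' 0 = 1) :
    ∀ x, Ψ (x + (π / γp + π / γm)) = Ψ x := by
  -- the vector field
  set v : ℝ × ℝ → ℝ × ℝ :=
    fun q => (q.2, -(γp ^ 2 * max q.1 0 - γm ^ 2 * max (-q.1) 0)) with hvdef
  -- Lipschitz constant
  set C : ℝ := γp ^ 2 + γm ^ 2 with hC
  have hC0 : 0 ≤ C := by positivity
  have hKpos : (0:ℝ) ≤ max 1 C := le_max_of_le_left zero_le_one
  have hglip : ∀ u w : ℝ, |(-(γp ^ 2 * max u 0 - γm ^ 2 * max (-u) 0)) -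
      (-(γp ^ 2 * max w 0 - γm ^ 2 * max (-w) 0))| ≤ C * |u - w| := by
    intro u w
    have h1 : |max u 0 - max w 0| ≤ |u - w| := abs_max_sub_max_le_abs u w 0
    have h2 : |max (-u) 0 - max (-w) 0| ≤ |u - w| := by
      refine le_trans (abs_max_sub_max_le_abs (-u) (-w) 0) ?_
      rw [neg_sub_neg, abs_sub_comm]
    calc |(-(γp ^ 2 * max u 0 - γm ^ 2 * max (-u) 0)) -
          (-(γp ^ 2 * max w 0 - γm ^ 2 * max (-w) 0))|
        = |(γp ^ 2) * (max w 0 - max u 0) + (γm ^ 2) * (max (-u) 0 - max (-w) 0)| := by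
          congr 1; ring
      _ ≤ |(γp ^ 2) * (max w 0 - max u 0)| + |(γm ^ 2) * (max (-u) 0 - max (-w) 0)| :=
          abs_add_le _ _
      _ = γp ^ 2 * |max w 0 - max u 0| + γm ^ 2 * |max (-u) 0 - max (-w) 0| := by
          rw [abs_mul, abs_mul, abs_of_nonneg (by positivity : (0:ℝ) ≤ γp ^ 2),
            abs_of_nonneg (by positivity : (0:ℝ) ≤ γm ^ 2)]
      _ ≤ γp ^ 2 * |u - w| + γm ^ 2 * |u - w| := by
          have h1' : |max w 0 - max u 0| ≤ |u - w| := by rw [abs_sub_comm]; exact h1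
          exact add_le_add (mul_le_mul_of_nonneg_left h1' (by positivity))
            (mul_le_mul_of_nonneg_left h2 (by positivity))
      _ = C * |u - w| := by ring
  have hvlip : LipschitzWith ⟨max 1 C, hKpos⟩ v := by
    apply LipschitzWith.of_dist_le_mul
    intro q r
    rw [Prod.dist_eq, Prod.dist_eq]
    simp only [hvdef, Real.dist_eq]
    change _ ≤ max 1 C * _
    apply max_le
    · calc |q.2 - r.2| ≤ 1 * max (|q.1 - r.1|) (|q.2 - r.2|) := by
            rw [one_mul]; exact le_max_right _ _
        _ ≤ max 1 C * max (|q.1 - r.1|) (|q.2 - r.2|) :=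
            mul_le_mul_of_nonneg_right (le_max_left _ _)
              (le_trans (abs_nonneg _) (le_max_left _ _))
    · calc |(-(γp ^ 2 * max q.1 0 - γm ^ 2 * max (-q.1) 0)) -
            (-(γp ^ 2 * max r.1 0 - γm ^ 2 * max (-r.1) 0))|
          ≤ C * |q.1 - r.1| := hglip _ _
        _ ≤ (max 1 C) * max (|q.1 - r.1|) (|q.2 - r.2|) :=
            mul_le_mul (le_max_right 1 C) (le_max_left _ _) (abs_nonneg _) hKpos
  -- the trajectory
  set F : ℝ → ℝ × ℝ := fun t => (Ψ t, Ψ' t) with hFdef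
  have hF : ∀ t, HasDerivAt F (v (F t)) t := fun t => (hΨ t).prodMk (hΨ' t)
  -- explicit solution on first bump
  set a1 : ℝ := π / γp with ha1
  set p : ℝ := π / γp + π / γm with hp
  have ha1pos : 0 < a1 := by positivity
  have hppos : a1 < p := by
    have : 0 < π / γm := by positivity
    simp only [hp, ha1]; linarith
  set S : ℝ → ℝ × ℝ := fun t => (Real.sin (γp * t) / γp, Real.cos (γp * t)) with hSdef
  have hlin : ∀ (c t : ℝ), HasDerivAt (fun t : ℝ => c * t) c t := by
    intro c t; simpa using (hasDerivAt_id t).const_mul c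
  have hS : ∀ t, HasDerivAt S (Real.cos (γp * t), -γp * Real.sin (γp * t)) t := by
    intro t
    have h1 : HasDerivAt (fun t => Real.sin (γp * t) / γp) (Real.cos (γp * t)) t := by
      have := ((Real.hasDerivAt_sin (γp * t)).comp t (hlin γp t)).div_const γp
      simpa [mul_div_assoc, div_self hγp.ne'] using this
    have h2 : HasDerivAt (fun t => Real.cos (γp * t)) (-γp * Real.sin (γp * t)) t := by
      have := (Real.hasDerivAt_cos (γp * t)).comp t (hlin γp t)
      exact this.congr_deriv (by ring)
    exact h1.prodMk h2
  have hSode : ∀ t ∈ Ico (0:ℝ) a1, HasDerivWithinAt S (v (S t)) (Ici t) t := by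
    intro t ht
    have hsin : 0 ≤ Real.sin (γp * t) := by
      apply Real.sin_nonneg_of_nonneg_of_le_pi
      · exact mul_nonneg hγp.le ht.1
      · rw [ha1] at ht
        calc γp * t ≤ γp * (π / γp) := by
              have := ht.2.le; nlinarith
          _ = π := by field_simp
    have hveq : v (S t) = (Real.cos (γp * t), -γp * Real.sin (γp * t)) := by
      simp only [hvdef, hSdef]
      congr 1
      have hm1 : max (Real.sin (γp * t) / γp) 0 = Real.sin (γp * t) / γp :=
        max_eq_left (by positivity)
      have hm2 : max (-(Real.sin (γp * t) / γp)) 0 = 0 :=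
        max_eq_right (neg_nonpos.mpr (by positivity))
      rw [hm1, hm2]
      field_simp
      ring
    rw [hveq]
    exact (hS t).hasDerivWithinAt
  -- Ψ on [0, a1]: F = S there, in particular F a1 = (0, -1)
  have hpia : γp * a1 = π := by rw [ha1]; field_simp
  have hpib : γm * (p - a1) = π := by
    rw [hp, ha1]; field_simp; ring
  have hstep1 : F a1 = (0, -1) := by
    have heq0 : F 0 = S 0 := by simp [hFdef, hSdef, h0, h0']
    have huniq := ODE_solution_unique (v := fun _ : ℝ => v) (K := ⟨max 1 C, hKpos⟩)
      (f := F) (g := S) (a := 0) (b := a1)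
      (fun _ => hvlip)
      (fun t _ => (hF t).continuousAt.continuousWithinAt)
      (fun t _ => (hF t).hasDerivWithinAt)
      (fun t _ => (hS t).continuousAt.continuousWithinAt)
      hSode heq0
    have := huniq (right_mem_Icc.mpr ha1pos.le)
    rw [this, hSdef]
    simp [hpia]
  -- explicit solution on second bump
  set T : ℝ → ℝ × ℝ :=
    fun t => (-(Real.sin (γm * (t - a1)) / γm), -Real.cos (γm * (t - a1))) with hTdef
  have hT : ∀ t, HasDerivAt T (-Real.cos (γm * (t - a1)), γm * Real.sin (γm * (t - a1))) t := by
    intro t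
    have hlin2 : HasDerivAt (fun t : ℝ => γm * (t - a1)) γm t := by
      simpa using ((hasDerivAt_id t).sub_const a1).const_mul γm
    have h1 : HasDerivAt (fun t => -(Real.sin (γm * (t - a1)) / γm))
        (-Real.cos (γm * (t - a1))) t := by
      have := (((Real.hasDerivAt_sin (γm * (t - a1))).comp t hlin2).div_const γm).neg
      exact this.congr_deriv (by field_simp)
    have h2 : HasDerivAt (fun t => -Real.cos (γm * (t - a1)))
        (γm * Real.sin (γm * (t - a1))) t := by
      have := ((Real.hasDerivAt_cos (γm * (t - a1))).comp t hlin2).neg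
      exact this.congr_deriv (by ring)
    exact h1.prodMk h2
  have hTode : ∀ t ∈ Ico a1 p, HasDerivWithinAt T (v (T t)) (Ici t) t := by
    intro t ht
    have hsin : 0 ≤ Real.sin (γm * (t - a1)) := by
      apply Real.sin_nonneg_of_nonneg_of_le_pi
      · exact mul_nonneg hγm.le (by linarith [ht.1])
      · calc γm * (t - a1) ≤ γm * (p - a1) := by nlinarith [ht.2.le]
          _ = π := hpib
    have hveq : v (T t) = (-Real.cos (γm * (t - a1)), γm * Real.sin (γm * (t - a1))) := by
      simp only [hvdef, hTdef]
      congr 1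
      have hm1 : max (-(Real.sin (γm * (t - a1)) / γm)) 0 = 0 :=
        max_eq_right (neg_nonpos.mpr (by positivity))
      have hm2 : max (-(-(Real.sin (γm * (t - a1)) / γm))) 0 = Real.sin (γm * (t - a1)) / γm := by
        rw [neg_neg]; exact max_eq_left (by positivity)
      rw [hm1, hm2]
      field_simp
      ring
    rw [hveq]
    exact (hT t).hasDerivWithinAt
  have hstep2 : F p = (0, 1) := by
    have heqa : F a1 = T a1 := by
      rw [hstep1, hTdef]; simp
    have huniq := ODE_solution_unique (v := fun _ : ℝ => v) (K := ⟨max 1 C, hKpos⟩)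
      (f := F) (g := T) (a := a1) (b := p)
      (fun _ => hvlip)
      (fun t _ => (hF t).continuousAt.continuousWithinAt)
      (fun t _ => (hF t).hasDerivWithinAt)
      (fun t _ => (hT t).continuousAt.continuousWithinAt)
      hTode heqa
    have := huniq (right_mem_Icc.mpr hppos.le)
    rw [this, hTdef]
    simp [hpib]
  -- periodicity via global uniqueness
  set G : ℝ → ℝ × ℝ := fun t => F (t + p) with hGdef
  have hG : ∀ t, HasDerivAt G (v (G t)) t := by
    intro t
    have := (hF (t + p)).scomp t ((hasDerivAt_id t).add_const p)
    exact this.congr_deriv (by simp [hGdef])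
  have heq0 : G 0 = F 0 := by
    show F (0 + p) = F 0
    rw [zero_add, hstep2, hFdef]
    simp [h0, h0']
  have hall := globalODEUnique hvlip hG hF heq0
  intro x
  have hx := (Prod.ext_iff.mp (hall x)).1
  simpa [hGdef, hFdef, hp] using hx
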